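/- Let Ω = 2 + N cos x, M the matrix with rows (Ω, −1), (1, 0), and let X be a unit vector in ℝ² with angle θ from the vector s = (1, Ω). Then ‖M X‖ ≥ |sin θ|·√(1 + Ω²) ≥ |sin θ|·|2 + N cos x| ≥ N|sin θ||cos x| − 2. -/

import Mathlib

/-- Let `Ω = 2 + N cos x`, `M` the matrix with rows `(Ω, −1)`, `(1, 0)`, and `X`
the unit vector at angle `θ` from `s = (1, Ω)`, i.e.
`X = (cos θ/√(1+Ω²))·(1,Ω) + (sin θ/√(1+Ω²))·(Ω,−1)`.  Then
`‖M X‖ ≥ |sin θ|·√(1+Ω²) ≥ |sin θ|·|2 + N cos x| ≥ N|sin θ||cos x| − 2`. -/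
theorem stmt13 (N x θ : ℝ) (hN : 0 < N)
    (Ω : ℝ) (hΩ : Ω = 2 + N * Real.cos x)
    (X : EuclideanSpace ℝ (Fin 2))
    (hX : X = (Real.cos θ / Real.sqrt (1 + Ω ^ 2)) •
              (WithLp.toLp 2 ![1, Ω] : EuclideanSpace ℝ (Fin 2)) +
          (Real.sin θ / Real.sqrt (1 + Ω ^ 2)) •
              (WithLp.toLp 2 ![Ω, -1] : EuclideanSpace ℝ (Fin 2)))
    (MX : EuclideanSpace ℝ (Fin 2)) (hMX : MX = ![Ω * X 0 - X 1, X 0]) :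
    |Real.sin θ| * Real.sqrt (1 + Ω ^ 2) ≤ ‖MX‖ ∧
    |Real.sin θ| * |2 + N * Real.cos x| ≤ |Real.sin θ| * Real.sqrt (1 + Ω ^ 2) ∧
    N * |Real.sin θ| * |Real.cos x| - 2 ≤ |Real.sin θ| * |2 + N * Real.cos x| := by
  have hpos : (0:ℝ) < 1 + Ω ^ 2 := by positivity
  have hs : Real.sqrt (1 + Ω ^ 2) > 0 := Real.sqrt_pos.mpr hpos
  have hsq : Real.sqrt (1 + Ω ^ 2) ^ 2 = 1 + Ω ^ 2 := Real.sq_sqrt hpos.le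
  have hX0 : X 0 = (Real.cos θ + Real.sin θ * Ω) / Real.sqrt (1 + Ω ^ 2) := by
    simp [hX, PiLp.add_apply, PiLp.smul_apply]
    ring
  have hX1 : X 1 = (Real.cos θ * Ω - Real.sin θ) / Real.sqrt (1 + Ω ^ 2) := by
    simp [hX, PiLp.add_apply, PiLp.smul_apply]
    ring
  have hMX0 : MX 0 = Real.sin θ * Real.sqrt (1 + Ω ^ 2) := by
    have h1 : MX 0 = Real.sin θ * (1 + Ω ^ 2) / Real.sqrt (1 + Ω ^ 2) := by
      simp [hMX, hX0, hX1]
      ring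
    rw [h1, div_eq_iff hs.ne', mul_assoc, ← sq, hsq]
  refine ⟨?_, ?_, ?_⟩
  · have hn : ‖MX‖ = Real.sqrt (MX 0 ^ 2 + MX 1 ^ 2) := by
      rw [EuclideanSpace.norm_eq]
      congr 1
      simp [Fin.sum_univ_two, sq_abs, sq]
    rw [hn]
    have h1 : |Real.sin θ| * Real.sqrt (1 + Ω ^ 2) = Real.sqrt (MX 0 ^ 2) := by
      rw [Real.sqrt_sq_eq_abs, hMX0, abs_mul, abs_of_pos hs]
    rw [h1]
    apply Real.sqrt_le_sqrt
    nlinarith [sq_nonneg (MX 1)]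
  · rw [← hΩ]
    apply mul_le_mul_of_nonneg_left _ (abs_nonneg _)
    rw [← Real.sqrt_sq_eq_abs]
    exact Real.sqrt_le_sqrt (by nlinarith)
  · rw [hΩ] at *
    have h1 : |Real.sin θ| ≤ 1 := Real.abs_sin_le_one θ
    have h2 : N * |Real.cos x| - 2 ≤ |2 + N * Real.cos x| := by
      have := abs_add_le (2 : ℝ) (N * Real.cos x)
      have := le_abs_self (N * Real.cos x)
      have h3 : |N * Real.cos x| ≤ |2 + N * Real.cos x| + 2 := by
        have := abs_sub_abs_le_abs_sub (N * Real.cos x) (-(2:ℝ))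
        simp at this
        calc |N * Real.cos x| ≤ |N * Real.cos x + 2| + |(-2:ℝ)| := by
              have := abs_add_le (N * Real.cos x + 2) (-2:ℝ); simpa using this
          _ = |2 + N * Real.cos x| + 2 := by rw [abs_neg, abs_two]; ring_nf
      rw [abs_mul, abs_of_pos hN] at h3
      linarith
    nlinarith [abs_nonneg (Real.sin θ), abs_nonneg (Real.cos x), abs_nonneg (2 + N * Real.cos x)]
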